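/- (Elliptical potential lemma in a Hilbert space) Let V be a real Hilbert space, λ > 0, and g_1,…,g_T ∈ V. Define A_t = λI + Σ_{s=1}^t g_s ⊗ g_s for t = 1,…,T, and let K_T = (⟨g_i, g_j⟩)_{i,j=1}^T ∈ ℝ^{T×T} be the Gram matrix. Then Σ_{t=1}^T ⟨g_t, A_t^{-1} g_t⟩ ≤ log det(I_T + λ^{-1} K_T). -/

import Mathlib

open scoped RealInnerProductSpace

/-- The rank-one operator `a ⊗ a : v ↦ ⟪a, v⟫ • a` on a real inner product space. -/
noncomputable def rankOne {V : Type*} [NormedAddCommGroup V] [InnerProductSpace ℝ V]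
    (a : V) : V →L[ℝ] V :=
  (innerSL ℝ a).smulRight a


open Matrix
noncomputable section

def epD (T n : ℕ) : Matrix (Fin T) (Fin T) ℝ :=
  Matrix.diagonal fun s => if (s : ℕ) < n then 1 else 0

lemma epD_mul_self (T n : ℕ) : epD T n * epD T n = epD T n := by
  rw [epD, Matrix.diagonal_mul_diagonal]
  refine congrArg Matrix.diagonal ?_
  funext s
  by_cases h : (s : ℕ) < n <;> simp [h]

section Step
variable {T : ℕ} {lam : ℝ} {K M X : Matrix (Fin T) (Fin T) ℝ} {t : Fin T}

-- abbreviation hypotheses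
lemma ep_DM_comm (hM : M = 1 + lam⁻¹ • (epD T (t.1+1) * K * epD T (t.1+1))) :
    epD T (t.1+1) * M = M * epD T (t.1+1) := by
  set D := epD T (t.1+1) with hD
  have h1 : D * (D * K * D) = D * K * D := by
    rw [← Matrix.mul_assoc, ← Matrix.mul_assoc, epD_mul_self]
  have h2 : (D * K * D) * D = D * K * D := by
    rw [Matrix.mul_assoc (D * K) D D, epD_mul_self]
  rw [hM, Matrix.mul_add, Matrix.add_mul, Matrix.mul_one, Matrix.one_mul,
    Matrix.mul_smul, Matrix.smul_mul, h1, h2]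

lemma ep_DMinv_comm (hM : M = 1 + lam⁻¹ • (epD T (t.1+1) * K * epD T (t.1+1)))
    (hMl : M⁻¹ * M = 1) (hMr : M * M⁻¹ = 1) :
    epD T (t.1+1) * M⁻¹ = M⁻¹ * epD T (t.1+1) := by
  set D := epD T (t.1+1) with hD
  calc D * M⁻¹ = (M⁻¹ * M) * (D * M⁻¹) := by rw [hMl, Matrix.one_mul]
    _ = M⁻¹ * ((M * D) * M⁻¹) := by noncomm_ring
    _ = M⁻¹ * ((D * M) * M⁻¹) := by rw [← ep_DM_comm hM]
    _ = M⁻¹ * (D * (M * M⁻¹)) := by noncomm_ring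
    _ = M⁻¹ * D := by rw [hMr, Matrix.mul_one]

lemma ep_X_eq (hM : M = 1 + lam⁻¹ • (epD T (t.1+1) * K * epD T (t.1+1)))
    (hX : X = epD T (t.1+1) * (M⁻¹ * epD T (t.1+1)))
    (hMl : M⁻¹ * M = 1) (hMr : M * M⁻¹ = 1) :
    X = M⁻¹ * epD T (t.1+1) := by
  rw [hX, ← Matrix.mul_assoc, ep_DMinv_comm hM hMl hMr, Matrix.mul_assoc, epD_mul_self]

lemma ep_DKD (hlam : 0 < lam)
    (hM : M = 1 + lam⁻¹ • (epD T (t.1+1) * K * epD T (t.1+1))) :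
    epD T (t.1+1) * K * epD T (t.1+1) = lam • M - lam • 1 := by
  have h : lam • (lam⁻¹ • (epD T (t.1+1) * K * epD T (t.1+1)))
      = epD T (t.1+1) * K * epD T (t.1+1) := by
    rw [smul_smul, mul_inv_cancel₀ hlam.ne', one_smul]
  rw [hM, smul_add, add_sub_cancel_left, h]

lemma ep_N_inv (hlam : 0 < lam)
    (hM : M = 1 + lam⁻¹ • (epD T (t.1+1) * K * epD T (t.1+1)))
    (hX : X = epD T (t.1+1) * (M⁻¹ * epD T (t.1+1)))
    (hMl : M⁻¹ * M = 1) (hMr : M * M⁻¹ = 1) :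
    (1 + lam⁻¹ • (K * epD T (t.1+1))) * (1 - lam⁻¹ • (K * X)) = 1 := by
  set D := epD T (t.1+1) with hD
  have hl0 : lam ≠ 0 := hlam.ne'
  have key : (K * D) * (K * X) = lam • (K * D) - lam • (K * X) := by
    have e1 : (K * D) * (K * X) = K * ((D * K * D) * (M⁻¹ * D)) := by
      rw [hX]; noncomm_ring
    have e2 : M * (M⁻¹ * D) = D := by rw [← Matrix.mul_assoc, hMr, Matrix.one_mul]
    rw [e1, ep_DKD hlam hM, Matrix.sub_mul, Matrix.smul_mul, Matrix.smul_mul, e2,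
      Matrix.one_mul, Matrix.mul_sub, mul_smul_comm, mul_smul_comm,
      ← ep_X_eq hM hX hMl hMr]
  rw [Matrix.mul_sub, Matrix.add_mul, Matrix.mul_one]
  simp only [Matrix.add_mul, Matrix.one_mul, Matrix.smul_mul, Matrix.mul_smul, smul_mul_assoc,
    mul_smul_comm, Matrix.mul_one]
  rw [key]
  match_scalars <;> field_simp <;> ring

end Step
end

noncomputable section Step2
open Matrix
variable {T : ℕ} {lam : ℝ} {K M X : Matrix (Fin T) (Fin T) ℝ} {t : Fin T}

def epE (t : Fin T) : Fin T → ℝ := fun s => if s = t then 1 else 0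

lemma ep_dot_single (v : Fin T → ℝ) : epE t ⬝ᵥ v = v t := by
  simp [epE, dotProduct, ite_mul]

lemma ep_mulVec_single (Q : Matrix (Fin T) (Fin T) ℝ) : Q *ᵥ epE t = fun i => Q i t := by
  funext i
  simp [epE, Matrix.mulVec, dotProduct, mul_ite]

lemma epD_succ : epD T (t.1+1) = epD T t.1 + Matrix.diagonal (epE t) := by
  rw [epD, epD, Matrix.diagonal_add]
  refine congrArg Matrix.diagonal ?_
  funext s
  have hst : s = t ↔ (s : ℕ) = (t : ℕ) := Fin.ext_iff
  by_cases h : s = t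
  · subst h
    simp [epE, Nat.lt_succ_iff]
  · have h' : (s : ℕ) ≠ (t : ℕ) := fun hh => h (Fin.ext hh)
    have : ((s : ℕ) < t.1+1) ↔ ((s : ℕ) < t.1) := by omega
    simp [epE, h, this]

lemma ep_col_row (K : Matrix (Fin T) (Fin T) ℝ) (lam : ℝ) :
    lam⁻¹ • (K * Matrix.diagonal (epE t))
      = replicateCol (Fin 1) (lam⁻¹ • (K *ᵥ epE t)) * replicateRow (Fin 1) (epE t) := by
  ext i j
  have hR : (replicateCol (Fin 1) (lam⁻¹ • (K *ᵥ epE t)) * replicateRow (Fin 1) (epE t)) i j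
      = lam⁻¹ * ((K *ᵥ epE t) i * epE t j) := by
    simp [Matrix.mul_apply, Matrix.replicateCol_apply, Matrix.replicateRow_apply, mul_assoc]
  rw [Matrix.smul_apply, hR, Matrix.mul_diagonal, ep_mulVec_single, smul_eq_mul]
  by_cases h : j = t <;> simp [epE, h]

end Step2

noncomputable section Step3
open Matrix
lemma epD_conjTranspose (T n : ℕ) : (epD T n)ᴴ = epD T n := by
  rw [epD, Matrix.diagonal_conjTranspose]
  refine congrArg Matrix.diagonal ?_
  simp

lemma ep_smul_posSemidef {T : ℕ} {X : Matrix (Fin T) (Fin T) ℝ} (hX : X.PosSemidef)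
    {c : ℝ} (hc : 0 ≤ c) : (c • X).PosSemidef := by
  refine Matrix.posSemidef_iff_dotProduct_mulVec.mpr ⟨?_, ?_⟩
  · show (c • X)ᴴ = c • X
    rw [Matrix.conjTranspose_smul, hX.1, star_trivial]
  · intro x
    rw [Matrix.smul_mulVec, dotProduct_smul, smul_eq_mul]
    exact mul_nonneg hc (hX.dotProduct_mulVec_nonneg x)

lemma epM_posDef {T : ℕ} {K : Matrix (Fin T) (Fin T) ℝ} (hK : K.PosSemidef)
    {lam : ℝ} (hlam : 0 < lam) (n : ℕ) :
    (1 + lam⁻¹ • (epD T n * K * epD T n)).PosDef := by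
  have h1 : (epD T n * K * epD T n).PosSemidef := by
    have := hK.mul_mul_conjTranspose_same (epD T n)
    rwa [epD_conjTranspose] at this
  have h2 := ep_smul_posSemidef h1 (le_of_lt (inv_pos.mpr hlam))
  rw [add_comm]
  exact Matrix.PosDef.posSemidef_add h2 Matrix.PosDef.one

lemma epN_det {T : ℕ} (K : Matrix (Fin T) (Fin T) ℝ) (lam : ℝ) (n : ℕ) :
    (1 + lam⁻¹ • (K * epD T n)).det = (1 + lam⁻¹ • (epD T n * K * epD T n)).det := by
  have h := Matrix.det_one_add_mul_comm (lam⁻¹ • (K * epD T n)) (epD T n)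
  rw [Matrix.smul_mul, Matrix.mul_assoc, epD_mul_self, Matrix.mul_smul,
    ← Matrix.mul_assoc] at h
  exact h


end Step3

noncomputable section Step4
open Matrix
variable {T : ℕ} {lam : ℝ} {K M X : Matrix (Fin T) (Fin T) ℝ} {t : Fin T}

lemma ep_det_step (hlam : 0 < lam) (hK : K.PosSemidef)
    (hM : M = 1 + lam⁻¹ • (epD T (t.1+1) * K * epD T (t.1+1)))
    (hX : X = epD T (t.1+1) * (M⁻¹ * epD T (t.1+1))) :
    (1 + lam⁻¹ • (K * epD T t.1)).det
      = (1 + lam⁻¹ • (K * epD T (t.1+1))).det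
        * (1 - (lam⁻¹ * K t t - lam⁻¹ * lam⁻¹ * ((K * X * K) t t))) := by
  have hMpd : M.PosDef := hM ▸ epM_posDef hK hlam (t.1+1)
  have hMdet : IsUnit M.det := isUnit_iff_ne_zero.mpr hMpd.det_pos.ne'
  have hMr : M * M⁻¹ = 1 := Matrix.mul_nonsing_inv M hMdet
  have hMl : M⁻¹ * M = 1 := Matrix.nonsing_inv_mul M hMdet
  set D := epD T (t.1+1) with hD
  set N : Matrix (Fin T) (Fin T) ℝ := 1 + lam⁻¹ • (K * D) with hN
  set R : Matrix (Fin T) (Fin T) ℝ := 1 - lam⁻¹ • (K * X) with hR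
  have hNR : N * R = 1 := ep_N_inv hlam hM hX hMl hMr
  set u : Fin T → ℝ := lam⁻¹ • (K *ᵥ epE t) with hu
  set w : Fin T → ℝ := R *ᵥ u with hw
  have hNw : N *ᵥ w = u := by
    rw [hw, Matrix.mulVec_mulVec, hNR, Matrix.one_mulVec]
  -- factorization
  have hfac : 1 + lam⁻¹ • (K * epD T t.1)
      = N * (1 - replicateCol (Fin 1) w * replicateRow (Fin 1) (epE t)) := by
    rw [Matrix.mul_sub, Matrix.mul_one, ← Matrix.mul_assoc, ← Matrix.replicateCol_mulVec, hNw,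
      ← ep_col_row, hN]
    have hsplit : K * D = K * epD T t.1 + K * Matrix.diagonal (epE t) := by
      rw [hD, epD_succ, Matrix.mul_add]
    rw [hsplit, smul_add]
    abel
  rw [hfac, Matrix.det_mul]
  -- the rank one determinant
  have hneg : (1 : Matrix (Fin T) (Fin T) ℝ) - replicateCol (Fin 1) w * replicateRow (Fin 1) (epE t)
      = 1 + replicateCol (Fin 1) (-w) * replicateRow (Fin 1) (epE t) := by
    ext i j
    simp [Matrix.mul_apply, Matrix.replicateCol_apply, Matrix.replicateRow_apply, sub_eq_add_neg]
  have hd1 : Matrix.det (1 + replicateCol (Fin 1) (-w) * replicateRow (Fin 1) (epE t) : Matrix (Fin T) (Fin T) ℝ) = 1 - epE t ⬝ᵥ w := by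
    have h := Matrix.det_one_add_replicateCol_mul_replicateRow (ι := Fin 1) (-w) (epE t)
    rw [dotProduct_neg, ← sub_eq_add_neg] at h
    convert h using 3
    ext i j
    simp [Matrix.mul_apply]
  rw [hneg, hd1]
  -- identify the scalar
  have hwt : epE t ⬝ᵥ w = lam⁻¹ * K t t - lam⁻¹ * lam⁻¹ * ((K * X * K) t t) := by
    rw [ep_dot_single, hw, hR, Matrix.sub_mulVec, Matrix.one_mulVec]
    have h1 : u t = lam⁻¹ * K t t := by
      rw [hu]
      simp [ep_mulVec_single]
    have h2 : ((lam⁻¹ • (K * X)) *ᵥ u) t = lam⁻¹ * lam⁻¹ * ((K * X * K) t t) := by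
      rw [hu, Matrix.smul_mulVec, Matrix.mulVec_smul, Matrix.mulVec_mulVec,
        ep_mulVec_single]
      simp [mul_assoc]

    rw [Pi.sub_apply, h1, h2]
  rw [hwt]
end Step4


section EP
variable {V : Type*} [NormedAddCommGroup V] [InnerProductSpace ℝ V] {T : ℕ}

noncomputable def epPhi (g : Fin T → V) (W : Matrix (Fin T) (Fin T) ℝ) : V →L[ℝ] V :=
  ∑ s, ∑ r, W s r • ((innerSL ℝ (g r)).smulRight (g s))

lemma epPhi_apply (g : Fin T → V) (W : Matrix (Fin T) (Fin T) ℝ) (v : V) :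
    epPhi g W v = ∑ s, (∑ r, W s r * ⟪g r, v⟫) • g s := by
  simp [epPhi, ContinuousLinearMap.sum_apply, Finset.sum_smul, smul_smul]

lemma epPhi_zero (g : Fin T → V) : epPhi g 0 = 0 := by
  simp [epPhi]

lemma epPhi_add (g : Fin T → V) (W W' : Matrix (Fin T) (Fin T) ℝ) :
    epPhi g (W + W') = epPhi g W + epPhi g W' := by
  simp [epPhi, add_smul, Finset.sum_add_distrib]

lemma epPhi_smul (g : Fin T → V) (a : ℝ) (W : Matrix (Fin T) (Fin T) ℝ) :
    epPhi g (a • W) = a • epPhi g W := by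
  simp [epPhi, Finset.smul_sum, smul_smul]

lemma inner_epPhi (g : Fin T → V) (W : Matrix (Fin T) (Fin T) ℝ) (i : Fin T) (v : V) :
    ⟪g i, epPhi g W v⟫ = ∑ s, ∑ r, ⟪g i, g s⟫ * (W s r * ⟪g r, v⟫) := by
  rw [epPhi_apply]
  simp [inner_sum, real_inner_smul_right, Finset.mul_sum, mul_comm, mul_left_comm]

end EP

section EP2
variable {V : Type*} [NormedAddCommGroup V] [InnerProductSpace ℝ V] {T : ℕ}

private lemma swap3 (F : Fin T → Fin T → Fin T → ℝ) :
    (∑ q, ∑ p, ∑ r, F r p q) = ∑ r, ∑ p, ∑ q, F r p q :=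
  calc (∑ q, ∑ p, ∑ r, F r p q) = ∑ p, ∑ q, ∑ r, F r p q := Finset.sum_comm
    _ = ∑ p, ∑ r, ∑ q, F r p q := Finset.sum_congr rfl fun _ _ => Finset.sum_comm
    _ = ∑ r, ∑ p, ∑ q, F r p q := Finset.sum_comm

lemma epPhi_mul (g : Fin T → V) (K : Matrix (Fin T) (Fin T) ℝ)
    (hK : ∀ i j, K i j = ⟪g i, g j⟫) (W W' : Matrix (Fin T) (Fin T) ℝ) :
    epPhi g W * epPhi g W' = epPhi g (W * K * W') := by
  ext v
  rw [ContinuousLinearMap.mul_apply, epPhi_apply g (W * K * W') v, epPhi_apply g W (epPhi g W' v)]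
  refine Finset.sum_congr rfl fun s _ => ?_
  congr 1
  have lhs : ∑ r, W s r * ⟪g r, epPhi g W' v⟫
      = ∑ r, ∑ p, ∑ q, W s r * (⟪g r, g p⟫ * (W' p q * ⟪g q, v⟫)) := by
    refine Finset.sum_congr rfl fun r _ => ?_
    rw [inner_epPhi, Finset.mul_sum]
    exact Finset.sum_congr rfl fun p _ => Finset.mul_sum _ _ _
  have rhs : ∑ q, (W * K * W') s q * ⟪g q, v⟫
      = ∑ q, ∑ p, ∑ r, W s r * (⟪g r, g p⟫ * (W' p q * ⟪g q, v⟫)) := by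
    simp only [Matrix.mul_apply, Finset.sum_mul]
    refine Finset.sum_congr rfl fun q _ => Finset.sum_congr rfl fun p _ =>
      Finset.sum_congr rfl fun r _ => ?_
    rw [hK]; ring
  rw [lhs, rhs, swap3]
end EP2

section EP3
open Matrix
variable {V : Type*} [NormedAddCommGroup V] [InnerProductSpace ℝ V] {T : ℕ}

lemma ep_gram_psd (g : Fin T → V) (K : Matrix (Fin T) (Fin T) ℝ)
    (hK : ∀ i j, K i j = ⟪g i, g j⟫) : K.PosSemidef := by
  refine Matrix.posSemidef_iff_dotProduct_mulVec.mpr ⟨?_, ?_⟩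
  · ext i j
    simp only [Matrix.conjTranspose_apply, hK, star_trivial]
    exact real_inner_comm _ _
  · intro x
    have key : star x ⬝ᵥ (K *ᵥ x) = ⟪∑ i, x i • g i, ∑ j, x j • g j⟫ := by
      rw [sum_inner]
      simp only [real_inner_smul_left, inner_sum, real_inner_smul_right, star_trivial]
      refine Finset.sum_congr rfl fun i _ => ?_
      simp only [Matrix.mulVec, dotProduct, hK]
      rw [Finset.mul_sum]
      exact Finset.sum_congr rfl fun j _ => by ring
    rw [key]
    exact real_inner_self_nonneg

lemma inner_epPhi_g (g : Fin T → V) (K : Matrix (Fin T) (Fin T) ℝ)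
    (hK : ∀ i j, K i j = ⟪g i, g j⟫) (W : Matrix (Fin T) (Fin T) ℝ) (i j : Fin T) :
    ⟪g i, epPhi g W (g j)⟫ = (K * W * K) i j := by
  rw [inner_epPhi]
  have h : (K * W * K) i j = ∑ r, ∑ s, K i s * W s r * K r j := by
    simp [Matrix.mul_apply, Finset.sum_mul]
  rw [h, Finset.sum_comm]
  refine Finset.sum_congr rfl fun s _ => Finset.sum_congr rfl fun r _ => ?_
  rw [hK, hK]
  ring

end EP3

noncomputable section EP4
open Matrix
variable {V : Type*} [NormedAddCommGroup V] [InnerProductSpace ℝ V] {T : ℕ}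

lemma rankOne_apply (a v : V) : rankOne a v = ⟪a, v⟫ • a := rfl

lemma epPhi_diagonal (g : Fin T → V) (d : Fin T → ℝ) :
    epPhi g (Matrix.diagonal d) = ∑ s, d s • rankOne (g s) := by
  ext v
  rw [epPhi_apply, ContinuousLinearMap.sum_apply]
  refine Finset.sum_congr rfl fun s _ => ?_
  have h : ∑ r, Matrix.diagonal d s r * ⟪g r, v⟫ = d s * ⟪g s, v⟫ := by
    simp [Matrix.diagonal_apply, ite_mul]
  rw [h, ContinuousLinearMap.smul_apply, rankOne_apply, smul_smul]

lemma sum_rankOne_Iic (g : Fin T → V) (t : Fin T) :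
    (∑ s ∈ Finset.Iic t, rankOne (g s)) = epPhi g (epD T (t.1+1)) := by
  rw [epD, epPhi_diagonal]
  have hfil : Finset.Iic t = Finset.univ.filter (fun s : Fin T => (s : ℕ) < t.1+1) := by
    ext s
    simp only [Finset.mem_Iic, Finset.mem_filter, Finset.mem_univ, true_and,
      Fin.le_def, Nat.lt_succ_iff]
  rw [hfil, Finset.sum_filter]
  refine Finset.sum_congr rfl fun s _ => ?_
  by_cases h : (s : ℕ) < t.1+1 <;> simp [h]

end EP4

noncomputable section EP5
open Matrix
variable {V : Type*} [NormedAddCommGroup V] [InnerProductSpace ℝ V] {T : ℕ}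

set_option synthInstance.maxHeartbeats 1000000 in
set_option maxHeartbeats 1000000 in
lemma ep_op_key {lam : ℝ} (hlam : 0 < lam) (g : Fin T → V)
    (K : Matrix (Fin T) (Fin T) ℝ) (hK : ∀ i j, K i j = ⟪g i, g j⟫)
    {M X : Matrix (Fin T) (Fin T) ℝ} {t : Fin T}
    (hM : M = 1 + lam⁻¹ • (epD T (t.1+1) * K * epD T (t.1+1)))
    (hX : X = epD T (t.1+1) * (M⁻¹ * epD T (t.1+1)))
    (Aop : V →L[ℝ] V)
    (hAop : Aop = lam • (1 : V →L[ℝ] V) + ∑ s ∈ Finset.Iic t, rankOne (g s)) :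
    ⟪g t, Ring.inverse Aop (g t)⟫
      = lam⁻¹ * K t t - lam⁻¹ * lam⁻¹ * ((K * X * K) t t) := by
  have hKpsd := ep_gram_psd g K hK
  have hMpd : M.PosDef := hM ▸ epM_posDef hKpsd hlam (t.1+1)
  have hMdet : IsUnit M.det := isUnit_iff_ne_zero.mpr hMpd.det_pos.ne'
  have hMr : M * M⁻¹ = 1 := Matrix.mul_nonsing_inv M hMdet
  have hMl : M⁻¹ * M = 1 := Matrix.nonsing_inv_mul M hMdet
  have hl0 : lam ≠ 0 := hlam.ne'
  have hXKD : X * K * epD T (t.1+1) = lam • epD T (t.1+1) - lam • X := by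
    have e1 : X * K * epD T (t.1+1)
        = epD T (t.1+1) * (M⁻¹ * (epD T (t.1+1) * K * epD T (t.1+1))) := by
      rw [hX]; noncomm_ring
    rw [e1, ep_DKD hlam hM, Matrix.mul_sub, mul_smul_comm, mul_smul_comm, hMl,
      Matrix.mul_one, Matrix.mul_sub, mul_smul_comm, mul_smul_comm, Matrix.mul_one,
      ep_DMinv_comm hM hMl hMr, ← ep_X_eq hM hX hMl hMr]
  have hDKX : epD T (t.1+1) * K * X = lam • epD T (t.1+1) - lam • X := by
    have e2 : epD T (t.1+1) * K * X
        = (epD T (t.1+1) * K * epD T (t.1+1)) * (M⁻¹ * epD T (t.1+1)) := by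
      rw [hX]; noncomm_ring
    have e3 : M * (M⁻¹ * epD T (t.1+1)) = epD T (t.1+1) := by
      rw [← Matrix.mul_assoc, hMr, Matrix.one_mul]
    rw [e2, ep_DKD hlam hM, Matrix.sub_mul, Matrix.smul_mul, Matrix.smul_mul,
      Matrix.one_mul, e3, ← ep_X_eq hM hX hMl hMr]
  set Wm : Matrix (Fin T) (Fin T) ℝ := (-(lam⁻¹ * lam⁻¹)) • X with hWm
  have id1 : lam • Wm + (lam⁻¹ • epD T (t.1+1) + epD T (t.1+1) * K * Wm) = 0 := by
    rw [hWm]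
    have h4 : epD T (t.1+1) * K * ((-(lam⁻¹ * lam⁻¹)) • X)
        = (-(lam⁻¹ * lam⁻¹)) • (lam • epD T (t.1+1) - lam • X) := by
      rw [mul_smul_comm, hDKX]
    rw [h4]
    match_scalars <;> field_simp <;> ring
  have id2 : lam⁻¹ • epD T (t.1+1) + (lam • Wm + Wm * K * epD T (t.1+1)) = 0 := by
    rw [hWm]
    have h5 : ((-(lam⁻¹ * lam⁻¹)) • X) * K * epD T (t.1+1)
        = (-(lam⁻¹ * lam⁻¹)) • (lam • epD T (t.1+1) - lam • X) := by
      rw [Matrix.smul_mul, Matrix.smul_mul, hXKD]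
    rw [h5]
    match_scalars <;> field_simp <;> ring
  -- operator-level inverse
  have h1 : (lam • (1 : V →L[ℝ] V)) * (lam⁻¹ • 1) = 1 := by
    rw [smul_mul_assoc, one_mul, smul_smul, mul_inv_cancel₀ hl0, one_smul]
  have h1' : (lam⁻¹ • (1 : V →L[ℝ] V)) * (lam • 1) = 1 := by
    rw [smul_mul_assoc, one_mul, smul_smul, inv_mul_cancel₀ hl0, one_smul]
  have h2 : (lam • (1 : V →L[ℝ] V)) * epPhi g Wm = epPhi g (lam • Wm) := by
    rw [smul_mul_assoc, one_mul, ← epPhi_smul]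
  have h2' : epPhi g Wm * (lam • (1 : V →L[ℝ] V)) = epPhi g (lam • Wm) := by
    rw [mul_smul_comm, mul_one, ← epPhi_smul]
  have h3 : epPhi g (epD T (t.1+1)) * (lam⁻¹ • (1 : V →L[ℝ] V))
      = epPhi g (lam⁻¹ • epD T (t.1+1)) := by
    rw [mul_smul_comm, mul_one, ← epPhi_smul]
  have h3' : (lam⁻¹ • (1 : V →L[ℝ] V)) * epPhi g (epD T (t.1+1))
      = epPhi g (lam⁻¹ • epD T (t.1+1)) := by
    rw [smul_mul_assoc, one_mul, ← epPhi_smul]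
  have hsum : (∑ s ∈ Finset.Iic t, rankOne (g s)) = epPhi g (epD T (t.1+1)) :=
    sum_rankOne_Iic g t
  have hAB : Aop * (lam⁻¹ • 1 + epPhi g Wm) = 1 := by
    rw [hAop, hsum, add_mul, mul_add, mul_add, h1, h2, h3,
      epPhi_mul g K hK (epD T (t.1+1)) Wm, add_assoc, ← epPhi_add, ← epPhi_add, id1,
      epPhi_zero, add_zero]
  have hBA : (lam⁻¹ • 1 + epPhi g Wm) * Aop = 1 := by
    rw [hAop, hsum, add_mul, mul_add, mul_add, h1', h2', h3',
      epPhi_mul g K hK Wm (epD T (t.1+1)), add_assoc, ← epPhi_add, ← epPhi_add, id2,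
      epPhi_zero, add_zero]
  have hinv : Ring.inverse Aop = lam⁻¹ • 1 + epPhi g Wm :=
    Ring.inverse_unit ⟨Aop, lam⁻¹ • 1 + epPhi g Wm, hAB, hBA⟩
  rw [hinv]
  rw [ContinuousLinearMap.add_apply, ContinuousLinearMap.smul_apply,
    ContinuousLinearMap.one_apply, inner_add_right, real_inner_smul_right,
    inner_epPhi_g g K hK Wm t t, ← hK]
  have hent : (K * Wm * K) t t = (-(lam⁻¹ * lam⁻¹)) * ((K * X * K) t t) := by
    rw [hWm, mul_smul_comm, Matrix.smul_mul]
    simp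
  rw [hent]
  ring
end EP5

noncomputable section EP6
open Matrix

lemma epD_zero (T : ℕ) : epD T 0 = 0 := by
  rw [epD]
  simp

lemma epD_top (T : ℕ) : epD T T = 1 := by
  rw [epD]
  have : (fun s : Fin T => if (s : ℕ) < T then (1:ℝ) else 0) = fun _ => 1 := by
    funext s
    simp [s.isLt]
  rw [this, Matrix.diagonal_one]

end EP6


/-- Elliptical potential lemma in a Hilbert space: with `A_t = λI + Σ_{s≤t} g_s ⊗ g_s`
and Gram matrix `K_T = (⟪g_i, g_j⟫)`, we have
`Σ_t ⟪g_t, A_t⁻¹ g_t⟫ ≤ log det (I_T + λ⁻¹ K_T)`. -/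
theorem elliptical_potential_lemma
    {V : Type*} [NormedAddCommGroup V] [InnerProductSpace ℝ V] [CompleteSpace V]
    (T : ℕ) (lam : ℝ) (hlam : 0 < lam)
    (g : Fin T → V) (A : Fin T → (V →L[ℝ] V))
    (hA : ∀ t, A t = lam • (1 : V →L[ℝ] V) + ∑ s ∈ Finset.Iic t, rankOne (g s))
    (K : Matrix (Fin T) (Fin T) ℝ)
    (hK : ∀ i j, K i j = ⟪g i, g j⟫) :
    ∑ t, ⟪g t, (Ring.inverse (A t)) (g t)⟫ ≤ Real.log (1 + lam⁻¹ • K).det := by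
  classical
  have hKpsd := ep_gram_psd g K hK
  set d : ℕ → ℝ := fun n => (1 + lam⁻¹ • (K * epD T n)).det with hd
  have hdpos : ∀ n, 0 < d n := by
    intro n
    rw [hd]
    simp only
    rw [epN_det]
    exact (epM_posDef hKpsd hlam n).det_pos
  -- per-step values
  set x : Fin T → ℝ := fun t =>
    lam⁻¹ * K t t - lam⁻¹ * lam⁻¹
      * ((K * (epD T (t.1+1) * ((1 + lam⁻¹ • (epD T (t.1+1) * K * epD T (t.1+1)))⁻¹
          * epD T (t.1+1))) * K) t t) with hx
  have hval : ∀ t, ⟪g t, (Ring.inverse (A t)) (g t)⟫ = x t := by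
    intro t
    exact ep_op_key hlam g K hK rfl rfl (A t) (hA t)
  have hdet : ∀ t : Fin T, d t.1 = d (t.1+1) * (1 - x t) := by
    intro t
    exact ep_det_step hlam hKpsd rfl rfl
  have hstep : ∀ t : Fin T, x t ≤ Real.log (d (t.1+1)) - Real.log (d t.1) := by
    intro t
    have h1 : 0 < 1 - x t := by
      have h0 := hdpos t.1
      rw [hdet t] at h0
      nlinarith [hdpos (t.1+1)]
    have h2 : Real.log (d t.1) = Real.log (d (t.1+1)) + Real.log (1 - x t) := by
      rw [hdet t, Real.log_mul (hdpos (t.1+1)).ne' h1.ne']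
    have h3 : Real.log (1 - x t) ≤ (1 - x t) - 1 := Real.log_le_sub_one_of_pos h1
    linarith
  calc ∑ t, ⟪g t, (Ring.inverse (A t)) (g t)⟫ = ∑ t, x t :=
        Finset.sum_congr rfl fun t _ => hval t
    _ ≤ ∑ t : Fin T, (Real.log (d (t.1+1)) - Real.log (d t.1)) :=
        Finset.sum_le_sum fun t _ => hstep t
    _ = ∑ i ∈ Finset.range T, (Real.log (d (i+1)) - Real.log (d i)) :=
        Fin.sum_univ_eq_sum_range (fun i => Real.log (d (i+1)) - Real.log (d i)) T
    _ = Real.log (d T) - Real.log (d 0) := Finset.sum_range_sub (fun i => Real.log (d i)) T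
    _ ≤ Real.log (1 + lam⁻¹ • K).det := by
        have h0 : d 0 = 1 := by
          rw [hd]
          simp [epD_zero]
        have hT : d T = (1 + lam⁻¹ • K).det := by
          rw [hd]
          simp only
          rw [epD_top, Matrix.mul_one]
        rw [h0, hT, Real.log_one]
        simp
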